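/- arXiv:2110.03273 — 2 statements merged into one kernel-verified Lean document; each statement's English description precedes it below -/
import Mathlib

section
/- The gradient flow solution converges to the minimum-norm least-squares solution: as t → ∞, β̂_gf(t) = (XᵀX)⁺(I − exp(−tXᵀX/n))XᵀY converges to (XᵀX)⁺XᵀY. -/
open Matrix Filter

/-- `P` is the Moore–Penrose pseudoinverse of `A`. -/
def IsMoorePenroseInv {d : ℕ} (A P : Matrix (Fin d) (Fin d) ℝ) : Prop :=
  A * P * A = A ∧ P * A * P = P ∧ (A * P)ᵀ = A * P ∧ (P * A)ᵀ = P * A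

/-- as `t → ∞`, the gradient flow solution
`β̂_gf(t) = (XᵀX)⁺(I − exp(−tXᵀX/n))XᵀY` converges to the minimum-norm least-squares
solution `(XᵀX)⁺XᵀY`. -/
theorem gradient_flow_limit {n d : ℕ} (hn : 0 < n)
    (X : Matrix (Fin n) (Fin d) ℝ) (Y : Fin n → ℝ)
    (P : Matrix (Fin d) (Fin d) ℝ) (hP : IsMoorePenroseInv (Xᵀ * X) P) :
    Tendsto (fun t : ℝ =>
        (P * ((1 : Matrix (Fin d) (Fin d) ℝ) -
          NormedSpace.exp ((-t / (n : ℝ)) • (Xᵀ * X)))) *ᵥ (Xᵀ *ᵥ Y))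
      atTop (nhds (P *ᵥ (Xᵀ *ᵥ Y))) := by
  obtain ⟨h1, h2, h3, h4⟩ := hP
  set A : Matrix (Fin d) (Fin d) ℝ := Xᵀ * X with hAdef
  have hAsymm : Aᵀ = A := by rw [hAdef, transpose_mul, transpose_transpose]
  have hAAP : A * (A * P) = A := by
    have h5 : (A * (A * P))ᵀ = A := by rw [transpose_mul, h3, hAsymm]; exact h1
    calc A * (A * P) = ((A * (A * P))ᵀ)ᵀ := by rw [transpose_transpose]
      _ = Aᵀ := by rw [h5]
      _ = A := hAsymm
  have t1 : Xᵀ * X = A := rfl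
  have t2 : Xᵀ * (X * (A * P)) = A := by rw [← Matrix.mul_assoc, t1]; exact hAAP
  have t3 : A * (P * Xᵀ) * X = A := by
    rw [← Matrix.mul_assoc A P Xᵀ, Matrix.mul_assoc (A * P) Xᵀ X, t1]
    exact h1
  have t4 : A * (P * Xᵀ) * (X * (A * P)) = A := by
    rw [← Matrix.mul_assoc, t3]; exact hAAP
  -- key : A * P * Xᵀ = Xᵀ
  have key : A * (P * Xᵀ) = Xᵀ := by
    have hM : (Xᵀ - A * (P * Xᵀ)) * (Xᵀ - A * (P * Xᵀ))ᴴ = 0 := by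
      have hconj : (Xᵀ - A * (P * Xᵀ))ᴴ = X - X * (A * P) := by
        have h6 : (A * (P * Xᵀ))ᵀ = X * (Pᵀ * Aᵀ) := by
          rw [transpose_mul, transpose_mul, transpose_transpose, Matrix.mul_assoc]
        rw [← transpose_mul, h3] at h6
        simp [conjTranspose_eq_transpose_of_trivial, transpose_sub, h6]
      rw [hconj]
      calc (Xᵀ - A * (P * Xᵀ)) * (X - X * (A * P))
          = Xᵀ * X - Xᵀ * (X * (A * P)) - A * (P * Xᵀ) * X + A * (P * Xᵀ) * (X * (A * P))
            := by rw [Matrix.sub_mul, Matrix.mul_sub, Matrix.mul_sub]; abel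
        _ = A - A - A + A := by rw [t1, t2, t3, t4]
        _ = 0 := by abel
    have h0 : Xᵀ - A * (P * Xᵀ) = 0 := (Matrix.self_mul_conjTranspose_eq_zero).mp hM
    exact (sub_eq_zero.mp h0).symm
  -- vectors
  set w : Fin d → ℝ := Xᵀ *ᵥ Y with hw
  set v : Fin d → ℝ := P *ᵥ w with hv
  have hAv : A *ᵥ v = w := by
    rw [hv, hw, mulVec_mulVec, mulVec_mulVec, Matrix.mul_assoc, key]
  -- spectral theorem
  have hPSD : A.PosSemidef := Matrix.posSemidef_conjTranspose_mul_self X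
  have hHerm : A.IsHermitian := hPSD.1
  set U : Matrix (Fin d) (Fin d) ℝ := (hHerm.eigenvectorUnitary : Matrix (Fin d) (Fin d) ℝ)
    with hU
  set μ : Fin d → ℝ := hHerm.eigenvalues with hμ
  have hUU : U * star U = 1 := (Matrix.mem_unitaryGroup_iff).mp hHerm.eigenvectorUnitary.2
  have hUU' : star U * U = 1 := (Matrix.mem_unitaryGroup_iff').mp hHerm.eigenvectorUnitary.2
  have hUinv : U⁻¹ = star U := Matrix.inv_eq_right_inv hUU
  have hUunit : IsUnit U := ⟨⟨U, star U, hUU, hUU'⟩, rfl⟩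
  have hspec : A = U * Matrix.diagonal μ * star U := by
    have := hHerm.spectral_theorem
    simpa using this
  -- exp computation
  have hE : ∀ t : ℝ, NormedSpace.exp ((-t / (n : ℝ)) • A) * A
      = U * Matrix.diagonal (fun i => Real.exp (-t / (n : ℝ) * μ i) * μ i) * star U := by
    intro t
    have hsmul : (-t / (n : ℝ)) • A
        = U * Matrix.diagonal (fun i => -t / (n : ℝ) * μ i) * U⁻¹ := by
      rw [hUinv]
      have ed : Matrix.diagonal (fun i => -t / (n : ℝ) * μ i)
          = (-t / (n : ℝ)) • Matrix.diagonal μ := by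
        rw [← Matrix.diagonal_smul]
        rfl
      rw [ed, Matrix.mul_smul, Matrix.smul_mul]
      conv_lhs => rw [hspec]
    have hexp : NormedSpace.exp ((-t / (n : ℝ)) • A)
        = U * Matrix.diagonal (fun i => Real.exp (-t / (n : ℝ) * μ i)) * star U := by
      rw [hsmul,
        Matrix.exp_conj U (Matrix.diagonal fun i => -t / (n : ℝ) * μ i) hUunit,
        Matrix.exp_diagonal, hUinv]
      congr 2
      ext i
      simp [Pi.exp_def, Real.exp_eq_exp_ℝ]
    rw [hexp]
    conv_lhs => rw [hspec]
    calc U * Matrix.diagonal (fun i => Real.exp (-t / (n : ℝ) * μ i)) * star U *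
          (U * Matrix.diagonal μ * star U)
        = U * (Matrix.diagonal (fun i => Real.exp (-t / (n : ℝ) * μ i)) * ((star U * U) *
            Matrix.diagonal μ)) * star U := by noncomm_ring
      _ = U * Matrix.diagonal (fun i => Real.exp (-t / (n : ℝ) * μ i) * μ i) * star U := by
          rw [hUU', one_mul, Matrix.diagonal_mul_diagonal]
  -- the diagonal tends to 0
  have hg : Tendsto (fun t : ℝ => fun i => Real.exp (-t / (n : ℝ) * μ i) * μ i) atTop
      (nhds 0) := by
    rw [tendsto_pi_nhds]
    intro i
    rcases eq_or_lt_of_le (show (0:ℝ) ≤ μ i from hPSD.eigenvalues_nonneg i) with h0 | hpos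
    · refine Tendsto.congr (f₁ := fun _ : ℝ => 0) (fun t => by rw [← h0, mul_zero])
        tendsto_const_nhds
    · have harg : Tendsto (fun t : ℝ => -t / (n : ℝ) * μ i) atTop atBot := by
        have hc : (0 : ℝ) < μ i / (n : ℝ) := div_pos hpos (by exact_mod_cast hn)
        have h7 : Tendsto (fun t : ℝ => -(t * (μ i / (n : ℝ)))) atTop atBot :=
          tendsto_neg_atTop_atBot.comp (Filter.tendsto_id.atTop_mul_const hc)
        refine h7.congr fun t => by ring
      have h8 := (Real.tendsto_exp_atBot.comp harg).mul_const (μ i)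
      simpa using h8
  -- assemble
  have hzero : Tendsto (fun t : ℝ => P *ᵥ ((NormedSpace.exp ((-t / (n : ℝ)) • A) * A) *ᵥ v))
      atTop (nhds 0) := by
    have hcont : Continuous fun u : Fin d → ℝ => P *ᵥ ((U * Matrix.diagonal u * star U) *ᵥ v) :=
      Continuous.matrix_mulVec (continuous_const)
        (Continuous.matrix_mulVec
          (((continuous_const.matrix_mul
            (continuous_id.matrix_diagonal)).matrix_mul continuous_const)) continuous_const)
    have h9 := (hcont.tendsto 0).comp hg
    simp only [Function.comp_def] at h9
    have e0 : P *ᵥ (U * Matrix.diagonal (0 : Fin d → ℝ) * star U) *ᵥ v = 0 := by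
      have : Matrix.diagonal (0 : Fin d → ℝ) = 0 := Matrix.diagonal_zero
      rw [this, Matrix.mul_zero, Matrix.zero_mul, Matrix.zero_mulVec, Matrix.mulVec_zero]
    rw [e0] at h9
    refine h9.congr fun t => ?_
    rw [hE t]
  have hfinal : Tendsto (fun t : ℝ => P *ᵥ w - P *ᵥ ((NormedSpace.exp ((-t / (n : ℝ)) • A) * A)
      *ᵥ v)) atTop (nhds (P *ᵥ w)) := by
    simpa using (tendsto_const_nhds (x := P *ᵥ w) (f := atTop)).sub hzero
  refine hfinal.congr fun t => ?_
  rw [← Matrix.mulVec_mulVec, hAv, ← Matrix.mulVec_mulVec, Matrix.sub_mulVec,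
    Matrix.one_mulVec, Matrix.mulVec_sub]
end

section
/- The gradient flow estimate has norm monotonically non-decreasing in t: t ↦ ‖(XᵀX)⁺(I − exp(−tXᵀX/n))XᵀY‖₂ is non-decreasing on [0, ∞). -/
open Matrix

noncomputable def euclNorm {d : ℕ} (v : Fin d → ℝ) : ℝ := Real.sqrt (∑ i, (v i) ^ 2)

namespace GFaux

variable {d : ℕ}

lemma mp_unique {A P Q : Matrix (Fin d) (Fin d) ℝ}
    (hP : IsMoorePenroseInv A P) (hQ : IsMoorePenroseInv A Q) : P = Q := by
  obtain ⟨hP1, hP2, hP3, hP4⟩ := hP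
  obtain ⟨hQ1, hQ2, hQ3, hQ4⟩ := hQ
  have hAP : A * P = A * Q := by
    calc A * P = (A * Q * A) * P := by rw [hQ1]
      _ = (A * Q) * (A * P) := by rw [mul_assoc]
      _ = (A * Q)ᵀ * (A * P)ᵀ := by rw [hQ3, hP3]
      _ = Qᵀ * (A * P * A)ᵀ := by simp [Matrix.transpose_mul, mul_assoc]
      _ = Qᵀ * Aᵀ := by rw [hP1]
      _ = (A * Q)ᵀ := (Matrix.transpose_mul A Q).symm
      _ = A * Q := hQ3
  have hPA : P * A = Q * A := by
    calc P * A = P * (A * Q * A) := by rw [hQ1]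
      _ = (P * A) * (Q * A) := by simp only [mul_assoc]
      _ = (P * A)ᵀ * (Q * A)ᵀ := by rw [hP4, hQ4]
      _ = (A * P * A)ᵀ * Qᵀ := by simp [Matrix.transpose_mul, mul_assoc]
      _ = Aᵀ * Qᵀ := by rw [hP1]
      _ = (Q * A)ᵀ := (Matrix.transpose_mul Q A).symm
      _ = Q * A := hQ4
  calc P = P * A * P := hP2.symm
    _ = Q * A * P := by rw [hPA]
    _ = Q * (A * P) := by rw [mul_assoc]
    _ = Q * (A * Q) := by rw [hAP]
    _ = Q := by rw [← mul_assoc, hQ2]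

/-- conjugation by `U` of the diagonal matrix with entries `f (lam i)`. -/
noncomputable def M (U : Matrix (Fin d) (Fin d) ℝ) (lam : Fin d → ℝ) (f : ℝ → ℝ) :
    Matrix (Fin d) (Fin d) ℝ := U * Matrix.diagonal (fun i => f (lam i)) * Uᵀ

variable {U : Matrix (Fin d) (Fin d) ℝ} {lam : Fin d → ℝ}

lemma M_congr {f g : ℝ → ℝ} (h : ∀ i, f (lam i) = g (lam i)) : M U lam f = M U lam g := by
  unfold M; congr 2; exact Matrix.diagonal_eq_diagonal_iff.mpr fun i => h i

lemma M_mul (hU : Uᵀ * U = 1) (f g : ℝ → ℝ) :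
    M U lam f * M U lam g = M U lam (fun a => f a * g a) := by
  unfold M
  simp only [mul_assoc]
  rw [← mul_assoc Uᵀ U, hU, one_mul, ← mul_assoc (Matrix.diagonal fun i => f (lam i)),
    Matrix.diagonal_mul_diagonal]

lemma M_one (hU : U * Uᵀ = 1) : M U lam (fun _ => 1) = 1 := by
  unfold M
  simp [Matrix.diagonal_one, hU]

lemma M_sub (f g : ℝ → ℝ) : M U lam f - M U lam g = M U lam (fun a => f a - g a) := by
  unfold M
  rw [← Matrix.sub_mul, ← Matrix.mul_sub, Matrix.diagonal_sub]

lemma M_smul (c : ℝ) (f : ℝ → ℝ) : c • M U lam f = M U lam (fun a => c * f a) := by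
  unfold M
  rw [← Matrix.smul_mul, ← Matrix.mul_smul]
  have h : c • (Matrix.diagonal fun i => f (lam i)) = Matrix.diagonal fun i => c * f (lam i) := by
    rw [← Matrix.diagonal_smul]
    rfl
  rw [h]

lemma M_transpose (f : ℝ → ℝ) : (M U lam f)ᵀ = M U lam f := by
  unfold M
  simp [Matrix.transpose_mul, Matrix.diagonal_transpose, mul_assoc]

lemma M_exp (hU1 : U * Uᵀ = 1) (hU2 : Uᵀ * U = 1) (f : ℝ → ℝ) :
    NormedSpace.exp (M U lam f) = M U lam (fun a => Real.exp (f a)) := by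
  set Uu : (Matrix (Fin d) (Fin d) ℝ)ˣ := ⟨U, Uᵀ, hU1, hU2⟩ with hUu
  have h1 : M U lam f = (Uu : Matrix (Fin d) (Fin d) ℝ) * Matrix.diagonal (fun i => f (lam i)) *
      ((Uu⁻¹ : (Matrix (Fin d) (Fin d) ℝ)ˣ) : Matrix (Fin d) (Fin d) ℝ) := rfl
  rw [h1, Matrix.exp_units_conj Uu, Matrix.exp_diagonal]
  have h2 : NormedSpace.exp (fun i => f (lam i)) = fun i => Real.exp (f (lam i)) := by
    funext i
    rw [Pi.exp_def, Real.exp_eq_exp_ℝ]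
  rw [h2]
  rfl

lemma euclNorm_mulVec_orth (hU : Uᵀ * U = 1) (x : Fin d → ℝ) :
    euclNorm (U *ᵥ x) = euclNorm x := by
  unfold euclNorm
  congr 1
  have h1 : ∀ v : Fin d → ℝ, ∑ i, (v i) ^ 2 = v ⬝ᵥ v := by
    intro v; simp [dotProduct, sq]
  rw [h1, h1, Matrix.dotProduct_mulVec]
  have h2 : (U *ᵥ x) ᵥ* U = x := by
    rw [← Matrix.mulVec_transpose, Matrix.mulVec_mulVec, hU, Matrix.one_mulVec]
  rw [h2]

lemma euclNorm_M_mulVec (hU : Uᵀ * U = 1) (f : ℝ → ℝ) (w : Fin d → ℝ) :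
    euclNorm (M U lam f *ᵥ w) =
      Real.sqrt (∑ i, (f (lam i)) ^ 2 * ((Uᵀ *ᵥ w) i) ^ 2) := by
  unfold M
  rw [← Matrix.mulVec_mulVec, ← Matrix.mulVec_mulVec, euclNorm_mulVec_orth hU]
  unfold euclNorm
  congr 1
  refine Finset.sum_congr rfl fun i _ => ?_
  rw [Matrix.mulVec_diagonal]
  ring

noncomputable def pinv (a : ℝ) : ℝ := if a = 0 then 0 else a⁻¹

end GFaux

open GFaux

/-- `t ↦ ‖(XᵀX)⁺(I − exp(−tXᵀX/n))XᵀY‖₂` is non-decreasing on `[0, ∞)`. -/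
theorem gradient_flow_norm_monotone {n d : ℕ} (hn : 0 < n)
    (X : Matrix (Fin n) (Fin d) ℝ) (Y : Fin n → ℝ)
    (P : Matrix (Fin d) (Fin d) ℝ) (hP : IsMoorePenroseInv (Xᵀ * X) P)
    (t₁ t₂ : ℝ) (ht₁ : 0 ≤ t₁) (ht : t₁ ≤ t₂) :
    euclNorm ((P * ((1 : Matrix (Fin d) (Fin d) ℝ) -
        NormedSpace.exp ((-t₁ / (n : ℝ)) • (Xᵀ * X)))) *ᵥ (Xᵀ *ᵥ Y)) ≤
      euclNorm ((P * ((1 : Matrix (Fin d) (Fin d) ℝ) -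
        NormedSpace.exp ((-t₂ / (n : ℝ)) • (Xᵀ * X)))) *ᵥ (Xᵀ *ᵥ Y)) := by
  classical
  have hA : (Xᵀ * X).IsHermitian := by
    have h := Matrix.isHermitian_conjTranspose_mul_self X
    rwa [Matrix.conjTranspose_eq_transpose_of_trivial] at h
  have hPSD : (Xᵀ * X).PosSemidef := by
    have h := Matrix.posSemidef_conjTranspose_mul_self X
    rwa [Matrix.conjTranspose_eq_transpose_of_trivial] at h
  set U : Matrix (Fin d) (Fin d) ℝ := (hA.eigenvectorUnitary : Matrix (Fin d) (Fin d) ℝ) with hUdef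
  set lam : Fin d → ℝ := hA.eigenvalues with hlamdef
  have hlam : ∀ i, 0 ≤ lam i := fun i => hPSD.eigenvalues_nonneg i
  have hU1 : U * Uᵀ = 1 := by
    have h := (Matrix.mem_unitaryGroup_iff).mp hA.eigenvectorUnitary.2
    rwa [Matrix.star_eq_conjTranspose, Matrix.conjTranspose_eq_transpose_of_trivial] at h
  have hU2 : Uᵀ * U = 1 := by
    have h := (Matrix.mem_unitaryGroup_iff').mp hA.eigenvectorUnitary.2
    rwa [Matrix.star_eq_conjTranspose, Matrix.conjTranspose_eq_transpose_of_trivial] at h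
  have hAM : Xᵀ * X = M U lam id := by
    have h := hA.spectral_theorem
    have hstar : star (hA.eigenvectorUnitary : Matrix (Fin d) (Fin d) ℝ) = Uᵀ := by
      rw [Matrix.star_eq_conjTranspose, Matrix.conjTranspose_eq_transpose_of_trivial]
    rw [h]
    simp only [Unitary.conjStarAlgAut_apply, Unitary.coe_star, hstar]
    unfold M
    congr 2
  have hMP : IsMoorePenroseInv (Xᵀ * X) (M U lam pinv) := by
    refine ⟨?_, ?_, ?_, ?_⟩
    · rw [hAM, M_mul hU2, M_mul hU2]
      refine M_congr fun i => ?_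
      by_cases h : lam i = 0
      · simp [pinv, h]
      · simp only [pinv, if_neg h, id]
        field_simp
    · rw [hAM, M_mul hU2, M_mul hU2]
      refine M_congr fun i => ?_
      by_cases h : lam i = 0
      · simp [pinv, h]
      · simp only [pinv, if_neg h, id]
        field_simp
    · rw [hAM, M_mul hU2]
      exact M_transpose _
    · rw [hAM, M_mul hU2]
      exact M_transpose _
  have hPeq : P = M U lam pinv := mp_unique hP hMP
  have key : ∀ t : ℝ, P * ((1 : Matrix (Fin d) (Fin d) ℝ) -
      NormedSpace.exp ((-t / (n : ℝ)) • (Xᵀ * X))) =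
      M U lam (fun a => pinv a * (1 - Real.exp (-t / (n : ℝ) * a))) := by
    intro t
    rw [hPeq, hAM, M_smul, M_exp hU1 hU2, ← M_one (U := U) (lam := lam) hU1, M_sub,
      M_mul hU2]
    exact M_congr fun i => by simp
  have norm_eq : ∀ t : ℝ,
      euclNorm ((P * ((1 : Matrix (Fin d) (Fin d) ℝ) -
        NormedSpace.exp ((-t / (n : ℝ)) • (Xᵀ * X)))) *ᵥ (Xᵀ *ᵥ Y)) =
      Real.sqrt (∑ i, (pinv (lam i) * (1 - Real.exp (-t / (n : ℝ) * lam i))) ^ 2 *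
        ((Uᵀ *ᵥ (Xᵀ *ᵥ Y)) i) ^ 2) := by
    intro t
    rw [key t, euclNorm_M_mulVec hU2]
  rw [norm_eq t₁, norm_eq t₂]
  apply Real.sqrt_le_sqrt
  apply Finset.sum_le_sum
  intro i _
  have ha := hlam i
  by_cases h : lam i = 0
  · simp [pinv, h]
  · have ha' : 0 < lam i := lt_of_le_of_ne ha (Ne.symm h)
    have hn' : (0:ℝ) < (n : ℝ) := by exact_mod_cast hn
    have hpv : 0 ≤ pinv (lam i) := by
      simp only [pinv, if_neg h]
      positivity
    have hg1 : 0 ≤ pinv (lam i) * (1 - Real.exp (-t₁ / (n : ℝ) * lam i)) := by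
      apply mul_nonneg hpv
      have hx : -t₁ / (n : ℝ) * lam i ≤ 0 := by
        apply mul_nonpos_of_nonpos_of_nonneg _ ha
        apply div_nonpos_of_nonpos_of_nonneg (by linarith) (le_of_lt hn')
      have : Real.exp (-t₁ / (n : ℝ) * lam i) ≤ Real.exp 0 := Real.exp_le_exp.mpr hx
      rw [Real.exp_zero] at this
      linarith
    have hmono : pinv (lam i) * (1 - Real.exp (-t₁ / (n : ℝ) * lam i)) ≤
        pinv (lam i) * (1 - Real.exp (-t₂ / (n : ℝ) * lam i)) := by
      apply mul_le_mul_of_nonneg_left _ hpv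
      have hx : -t₂ / (n : ℝ) * lam i ≤ -t₁ / (n : ℝ) * lam i := by
        apply mul_le_mul_of_nonneg_right _ ha
        exact (div_le_div_iff_of_pos_right hn').mpr (by linarith)
      have := Real.exp_le_exp.mpr hx
      linarith
    exact mul_le_mul_of_nonneg_right (pow_le_pow_left₀ hg1 hmono 2) (sq_nonneg _)
end
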